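/- Let (X,d) be a proper geodesic metric space and let Y ⊆ X be a C-contracting subset. Then for any two points x, y ∈ X and any a ∈ π_Y(x), b ∈ π_Y(y), if d(a,b) > C then d(x,y) ≥ d(x,a) + d(a,b) + d(b,y) − 8C. -/

import Mathlib

open Metric

/-- A geodesic parametrisation from `x` to `y`, with image `s`: an isometric embedding of
the interval `[0, dist x y]` sending the endpoints to `x` and `y`. -/
def IsGeodesicFromTo {X : Type*} [MetricSpace X] (s : Set X) (x y : X) : Prop :=
  ∃ γ : ℝ → X,
    (∀ u ∈ Set.Icc (0 : ℝ) (dist x y), ∀ v ∈ Set.Icc (0 : ℝ) (dist x y),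
      dist (γ u) (γ v) = |u - v|) ∧
    γ 0 = x ∧ γ (dist x y) = y ∧ s = γ '' Set.Icc (0 : ℝ) (dist x y)

/-- A geodesic segment: the image of an isometric embedding of a compact real interval. -/
def IsGeodesicSegment {X : Type*} [MetricSpace X] (s : Set X) : Prop :=
  ∃ x y : X, IsGeodesicFromTo s x y

/-- A metric space is geodesic if any two points are joined by a geodesic segment. -/
def GeodesicSpace (X : Type*) [MetricSpace X] : Prop :=
  ∀ x y : X, ∃ s : Set X, IsGeodesicFromTo s x y

/-- Closest point projection of a point to a subset:
`π_Y(x) = {y ∈ closure Y | d(x,y) = d(x,Y)}`. -/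
def projSet {X : Type*} [MetricSpace X] (Y : Set X) (x : X) : Set X :=
  {y ∈ closure Y | dist x y = Metric.infDist x Y}

/-- Closest point projection of a subset `B`: `π_Y(B) = ⋃_{x ∈ B} π_Y(x)`. -/
def projSetOf {X : Type*} [MetricSpace X] (Y B : Set X) : Set X :=
  ⋃ x ∈ B, projSet Y x

/-- The closed `r`-neighbourhood `N_r(A) = {x | d(x,A) ≤ r}`. -/
def ptNbhd {X : Type*} [MetricSpace X] (r : ℝ) (A : Set X) : Set X :=
  {x | Metric.infDist x A ≤ r}

/-- `Y` is `C`-contracting : for every geodesic segment `s` with `d(s,Y) ≥ C`,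
one has `diam (π_Y(s)) ≤ C`. -/
def IsContractingWith {X : Type*} [MetricSpace X] (C : ℝ) (Y : Set X) : Prop :=
  ∀ s : Set X, IsGeodesicSegment s → (∀ x ∈ s, C ≤ Metric.infDist x Y) →
    ∀ p ∈ projSetOf Y s, ∀ q ∈ projSetOf Y s, dist p q ≤ C

/-- `Y` is contracting if it is `C`-contracting for some `C ≥ 0`. -/
def IsContractingSet {X : Type*} [MetricSpace X] (Y : Set X) : Prop :=
  ∃ C : ℝ, 0 ≤ C ∧ IsContractingWith C Y

/-- `Y` and `Z` have `R`-bounded intersection for some gauge function `R`: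
`diam (N_r(Y) ∩ N_r(Z)) ≤ R r` for all `r ≥ 0`. -/
def HasBoundedIntersection {X : Type*} [MetricSpace X] (Y Z : Set X) : Prop :=
  ∃ R : ℝ → ℝ, ∀ r : ℝ, 0 ≤ r →
    ∀ p ∈ ptNbhd r Y ∩ ptNbhd r Z, ∀ q ∈ ptNbhd r Y ∩ ptNbhd r Z, dist p q ≤ R r

/-- The orbit `⟨g⟩ · o` of the basepoint under the cyclic subgroup generated by `g`. -/
def cyclicOrbit {G X : Type*} [Group G] [MetricSpace X] [MulAction G X] (g : G) (o : X) :
    Set X :=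
  Set.range fun n : ℤ => (g ^ n) • o

/-- `g` is a contracting element for the action: the orbit `⟨g⟩ · o` is a contracting
subset and `n ↦ gⁿ • o` is a quasi-isometric embedding of `ℤ`. -/
def IsContractingElement {G X : Type*} [Group G] [MetricSpace X] [MulAction G X]
    (o : X) (g : G) : Prop :=
  IsContractingSet (cyclicOrbit g o) ∧
    ∃ K c : ℝ, 1 ≤ K ∧ 0 ≤ c ∧ ∀ m n : ℤ,
      |(m : ℝ) - (n : ℝ)| / K - c ≤ dist ((g ^ m) • o) ((g ^ n) • o) ∧
      dist ((g ^ m) • o) ((g ^ n) • o) ≤ K * |(m : ℝ) - (n : ℝ)| + c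

/-- Two elements are weakly independent if their cyclic orbits have bounded intersection. -/
def WeaklyIndependent {G X : Type*} [Group G] [MetricSpace X] [MulAction G X]
    (o : X) (g h : G) : Prop :=
  HasBoundedIntersection (cyclicOrbit g o) (cyclicOrbit h o)

/-- The action of `G` on `X` has the contracting property: there exist two weakly
independent contracting elements. -/
def ContractingProperty (G : Type*) (X : Type*) [Group G] [MetricSpace X] [MulAction G X]
    (o : X) : Prop :=
  ∃ g h : G, IsContractingElement o g ∧ IsContractingElement o h ∧ WeaklyIndependent o g h

/-- Stable translation length `ℓ_d(g) = lim_n d(o, gⁿ • o)/n`; by subadditivity (Fekete's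
lemma) the limit exists and equals the infimum below. -/
noncomputable def stableLength {G X : Type*} [Group G] [MetricSpace X] [MulAction G X]
    (o : X) (g : G) : ℝ :=
  ⨅ n : ℕ+, dist o ((g ^ (n : ℕ)) • o) / ((n : ℕ) : ℝ)

section Aux

open Metric Set

/-- In a proper space, the closest-point projection to a nonempty set is nonempty. -/
lemma projSet_nonempty' {X : Type*} [MetricSpace X] [ProperSpace X]
    (Y : Set X) (hne : Y.Nonempty) (x : X) : (projSet Y x).Nonempty := by
  obtain ⟨y, hy, hyd⟩ := Metric.exists_mem_closure_infDist_eq_dist hne x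
  exact ⟨y, hy, hyd.symm⟩

/-- Key lemma: if a geodesic parametrised segment `γ` on `[s,t]` stays at distance
`≥ C` from `Y`, then projections of its endpoints are `C`-close. -/
lemma key_proj {X : Type*} [MetricSpace X]
    (Y : Set X) (C : ℝ) (hY : IsContractingWith C Y)
    (γ : ℝ → X) (s t : ℝ) (hst : s ≤ t)
    (hiso : ∀ u ∈ Set.Icc s t, ∀ v ∈ Set.Icc s t, dist (γ u) (γ v) = |u - v|)
    (hfar : ∀ u ∈ Set.Icc s t, C ≤ Metric.infDist (γ u) Y)
    (p q : X) (hp : p ∈ projSet Y (γ s)) (hq : q ∈ projSet Y (γ t)) :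
    dist p q ≤ C := by
  have hs : s ∈ Set.Icc s t := ⟨le_rfl, hst⟩
  have ht : t ∈ Set.Icc s t := ⟨hst, le_rfl⟩
  have hd : dist (γ s) (γ t) = t - s := by
    rw [hiso s hs t ht, abs_sub_comm, abs_of_nonneg (by linarith)]
  set γ' : ℝ → X := fun u => γ (u + s) with hγ'
  have hmem : ∀ u ∈ Set.Icc (0:ℝ) (dist (γ s) (γ t)), u + s ∈ Set.Icc s t := by
    rw [hd]; rintro u ⟨h0, h1⟩; constructor <;> linarith
  set seg : Set X := γ' '' Set.Icc (0:ℝ) (dist (γ s) (γ t)) with hseg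
  have hgeo : IsGeodesicFromTo seg (γ s) (γ t) := by
    refine ⟨γ', fun u hu v hv => ?_, by simp [hγ'], by rw [hγ', hd]; simp, rfl⟩
    rw [hγ']
    simp only
    rw [hiso _ (hmem u hu) _ (hmem v hv)]
    ring_nf
  have hsmem : γ s ∈ seg := ⟨0, ⟨le_rfl, by rw [hd]; linarith⟩, by simp [hγ']⟩
  have htmem : γ t ∈ seg := ⟨dist (γ s) (γ t), ⟨dist_nonneg, le_rfl⟩, by rw [hγ', hd]; simp⟩
  have hfar' : ∀ z ∈ seg, C ≤ Metric.infDist z Y := by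
    rintro z ⟨u, hu, rfl⟩
    exact hfar _ (hmem u hu)
  exact hY seg ⟨γ s, γ t, hgeo⟩ hfar' p
    (Set.mem_biUnion hsmem hp) q (Set.mem_biUnion htmem hq)

end Aux

/-- thin quadrilateral inequality for a `C`-contracting set `Y`: if
`a ∈ π_Y(x)`, `b ∈ π_Y(y)` and `d(a,b) > C`, then
`d(x,y) ≥ d(x,a) + d(a,b) + d(b,y) − 8C`. -/
theorem thin_quadrilateral {X : Type*}
    [MetricSpace X] [ProperSpace X] (hgeo : GeodesicSpace X)
    (Y : Set X) (C : ℝ) (hC : 0 ≤ C) (hY : IsContractingWith C Y)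
    (x y a b : X) (ha : a ∈ projSet Y x) (hb : b ∈ projSet Y y)
    (hab : C < dist a b) :
    dist x a + dist a b + dist b y - 8 * C ≤ dist x y := by
  obtain ⟨s, γ, hiso, hγ0, hγL, -⟩ := hgeo x y
  set L := dist x y with hL
  have hL0 : (0:ℝ) ≤ L := dist_nonneg
  have hYne : Y.Nonempty := by
    rcases (closure_nonempty_iff.mp ⟨a, ha.1⟩) with ⟨z, hz⟩; exact ⟨z, hz⟩
  set f : ℝ → ℝ := fun t => Metric.infDist (γ t) Y with hf
  have hlip : ∀ u ∈ Set.Icc (0:ℝ) L, ∀ v ∈ Set.Icc (0:ℝ) L, f u ≤ f v + |u - v| := by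
    intro u hu v hv
    calc f u ≤ f v + dist (γ u) (γ v) := Metric.infDist_le_infDist_add_dist
    _ = f v + |u - v| := by rw [hiso u hu v hv]
  set T : Set ℝ := {t ∈ Set.Icc (0:ℝ) L | f t ≤ C} with hT
  have hTne : T.Nonempty := by
    by_contra hemp
    have hfar : ∀ u ∈ Set.Icc (0:ℝ) L, C ≤ f u := by
      intro u hu
      by_contra hlt
      exact hemp ⟨u, hu, (not_le.mp hlt).le⟩
    have := key_proj Y C hY γ 0 L hL0 hiso hfar a b (hγ0 ▸ ha) (hγL ▸ hb)
    linarith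
  have hTbdd : BddBelow T := ⟨0, fun t ht => ht.1.1⟩
  have hTbdd' : BddAbove T := ⟨L, fun t ht => ht.1.2⟩
  set t₁ := sInf T with ht₁
  set t₂ := sSup T with ht₂
  have ht₁mem : t₁ ∈ Set.Icc (0:ℝ) L := by
    obtain ⟨t, htT⟩ := id hTne
    exact ⟨le_csInf hTne fun u hu => hu.1.1, (csInf_le hTbdd htT).trans htT.1.2⟩
  have ht₂mem : t₂ ∈ Set.Icc (0:ℝ) L := by
    obtain ⟨t, htT⟩ := id hTne
    exact ⟨htT.1.1.trans (le_csSup hTbdd' htT), csSup_le hTne fun u hu => hu.1.2⟩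
  have ht12 : t₁ ≤ t₂ := csInf_le_csSup hTne hTbdd hTbdd'
  have hnotT₁ : ∀ u ∈ Set.Icc (0:ℝ) L, u < t₁ → C < f u := by
    intro u hu hlt
    by_contra hle
    have : u ∈ T := ⟨hu, not_lt.mp hle⟩
    have := csInf_le hTbdd this; linarith
  have hnotT₂ : ∀ u ∈ Set.Icc (0:ℝ) L, t₂ < u → C < f u := by
    intro u hu hlt
    by_contra hle
    have : u ∈ T := ⟨hu, not_lt.mp hle⟩
    have := le_csSup hTbdd' this; linarith
  have hft₁ : f t₁ ≤ C := by
    refine le_of_forall_pos_le_add fun ε hε => ?_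
    obtain ⟨t, htT, hlt⟩ := exists_lt_of_csInf_lt hTne
      (show sInf T < t₁ + ε by rw [← ht₁]; linarith)
    have h1 : f t₁ ≤ f t + |t₁ - t| := hlip t₁ ht₁mem t htT.1
    have hle := csInf_le hTbdd htT
    have h2 : |t₁ - t| ≤ ε := by
      rw [abs_le]; constructor <;> [linarith; linarith]
    linarith [htT.2]
  have hft₂ : f t₂ ≤ C := by
    refine le_of_forall_pos_le_add fun ε hε => ?_
    obtain ⟨t, htT, hlt⟩ := exists_lt_of_lt_csSup hTne
      (show t₂ - ε < sSup T by rw [← ht₂]; linarith)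
    have h1 : f t₂ ≤ f t + |t₂ - t| := hlip t₂ ht₂mem t htT.1
    have hle := le_csSup hTbdd' htT
    have h2 : |t₂ - t| ≤ ε := by
      rw [abs_le]; constructor <;> [linarith; linarith]
    linarith [htT.2]
  have hge₁ : 0 < t₁ → C ≤ f t₁ := by
    intro h0
    refine le_of_forall_pos_le_add fun ε hε => ?_
    set δ := min ε t₁ with hδ
    have hδ0 : 0 < δ := lt_min hε h0
    have hδε : δ ≤ ε := min_le_left _ _
    have hδt : δ ≤ t₁ := min_le_right _ _
    have hu' : t₁ - δ/2 ∈ Set.Icc (0:ℝ) L := ⟨by linarith, by linarith [ht₁mem.2]⟩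
    have hgt : C < f (t₁ - δ/2) := hnotT₁ _ hu' (by linarith)
    have hlp := hlip (t₁ - δ/2) hu' t₁ ht₁mem
    have habs : |t₁ - δ/2 - t₁| = δ/2 := by rw [abs_of_nonpos (by linarith)]; ring
    linarith
  have hge₂ : t₂ < L → C ≤ f t₂ := by
    intro h0
    refine le_of_forall_pos_le_add fun ε hε => ?_
    set δ := min ε (L - t₂) with hδ
    have hδ0 : 0 < δ := lt_min hε (by linarith)
    have hδε : δ ≤ ε := min_le_left _ _
    have hδt : δ ≤ L - t₂ := min_le_right _ _
    have hu' : t₂ + δ/2 ∈ Set.Icc (0:ℝ) L := ⟨by linarith [ht₂mem.1], by linarith⟩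
    have hgt : C < f (t₂ + δ/2) := hnotT₂ _ hu' (by linarith)
    have hlp := hlip (t₂ + δ/2) hu' t₂ ht₂mem
    have habs : |t₂ + δ/2 - t₂| = δ/2 := by rw [abs_of_nonneg (by linarith)]; ring
    linarith
  have da : dist (γ t₁) a ≤ 2 * C := by
    rcases eq_or_lt_of_le ht₁mem.1 with h0 | h0
    · have h1 : f 0 ≤ C := by rw [h0]; exact hft₁
      have h2 : dist x a ≤ C := by rw [ha.2, ← hγ0]; exact h1
      calc dist (γ t₁) a = dist x a := by rw [← h0, hγ0]
      _ ≤ 2 * C := by linarith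
    · have hfar : ∀ u ∈ Set.Icc (0:ℝ) t₁, C ≤ f u := by
        intro u hu
        rcases eq_or_lt_of_le hu.2 with h | h
        · rw [h]; exact hge₁ h0
        · exact le_of_lt (hnotT₁ u ⟨hu.1, hu.2.trans ht₁mem.2⟩ h)
      obtain ⟨p, hp⟩ := projSet_nonempty' Y hYne (γ t₁)
      have hiso' : ∀ u ∈ Set.Icc (0:ℝ) t₁, ∀ v ∈ Set.Icc (0:ℝ) t₁,
          dist (γ u) (γ v) = |u - v| := fun u hu v hv =>
        hiso u ⟨hu.1, hu.2.trans ht₁mem.2⟩ v ⟨hv.1, hv.2.trans ht₁mem.2⟩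
      have hpa : dist a p ≤ C :=
        key_proj Y C hY γ 0 t₁ ht₁mem.1 hiso' hfar a p (hγ0 ▸ ha) hp
      have hγp : dist (γ t₁) p ≤ C := by rw [hp.2]; exact hft₁
      calc dist (γ t₁) a ≤ dist (γ t₁) p + dist p a := dist_triangle _ _ _
      _ ≤ C + C := add_le_add hγp (by rw [dist_comm]; exact hpa)
      _ = 2 * C := by ring
  have db : dist (γ t₂) b ≤ 2 * C := by
    rcases eq_or_lt_of_le ht₂mem.2 with hL2 | hL2
    · have h1 : f L ≤ C := by rw [← hL2]; exact hft₂
      have h2 : dist y b ≤ C := by rw [hb.2, ← hγL]; exact h1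
      calc dist (γ t₂) b = dist y b := by rw [hL2, hγL]
      _ ≤ 2 * C := by linarith
    · have hfar : ∀ u ∈ Set.Icc t₂ L, C ≤ f u := by
        intro u hu
        rcases eq_or_lt_of_le hu.1 with h | h
        · rw [← h]; exact hge₂ hL2
        · exact le_of_lt (hnotT₂ u ⟨ht₂mem.1.trans hu.1, hu.2⟩ h)
      obtain ⟨p, hp⟩ := projSet_nonempty' Y hYne (γ t₂)
      have hiso' : ∀ u ∈ Set.Icc t₂ L, ∀ v ∈ Set.Icc t₂ L,
          dist (γ u) (γ v) = |u - v| := fun u hu v hv =>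
        hiso u ⟨ht₂mem.1.trans hu.1, hu.2⟩ v ⟨ht₂mem.1.trans hv.1, hv.2⟩
      have hpb : dist p b ≤ C :=
        key_proj Y C hY γ t₂ L ht₂mem.2 hiso' hfar p b hp (hγL ▸ hb)
      have hγp : dist (γ t₂) p ≤ C := by rw [hp.2]; exact hft₂
      calc dist (γ t₂) b ≤ dist (γ t₂) p + dist p b := dist_triangle _ _ _
      _ ≤ C + C := add_le_add hγp hpb
      _ = 2 * C := by ring
  have h0mem : (0:ℝ) ∈ Set.Icc (0:ℝ) L := ⟨le_rfl, hL0⟩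
  have hLmem : L ∈ Set.Icc (0:ℝ) L := ⟨hL0, le_rfl⟩
  have e1 : dist x (γ t₁) = t₁ := by
    rw [← hγ0, hiso 0 h0mem t₁ ht₁mem, abs_sub_comm, sub_zero, abs_of_nonneg ht₁mem.1]
  have e2 : dist (γ t₁) (γ t₂) = t₂ - t₁ := by
    rw [hiso t₁ ht₁mem t₂ ht₂mem, abs_sub_comm, abs_of_nonneg (by linarith)]
  have e3 : dist (γ t₂) y = L - t₂ := by
    rw [← hγL, hiso t₂ ht₂mem L hLmem, abs_sub_comm, abs_of_nonneg (by linarith [ht₂mem.2])]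
  have i1 : dist x a ≤ t₁ + 2 * C := by
    calc dist x a ≤ dist x (γ t₁) + dist (γ t₁) a := dist_triangle _ _ _
    _ ≤ t₁ + 2 * C := by rw [e1]; linarith
  have i2 : dist a b ≤ (t₂ - t₁) + 4 * C := by
    calc dist a b ≤ dist a (γ t₁) + dist (γ t₁) (γ t₂) + dist (γ t₂) b :=
      dist_triangle4 _ _ _ _
    _ ≤ (t₂ - t₁) + 4 * C := by rw [e2, dist_comm a]; linarith
  have i3 : dist b y ≤ (L - t₂) + 2 * C := by
    calc dist b y ≤ dist b (γ t₂) + dist (γ t₂) y := dist_triangle _ _ _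
    _ ≤ (L - t₂) + 2 * C := by rw [e3, dist_comm b]; linarith
  have hLsum : L = t₁ + (t₂ - t₁) + (L - t₂) := by ring
  linarith
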